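/- Let x, r, a be real numbers with 0 < x < 1, r > 1, a > 0, let i, j ≥ 1 be integers and k an integer with i − k ≥ 1 and j + k ≥ 1, and fix a sign ϵ ∈ {+1, −1}. Then there exists ρ > 0 such that for every complex number z with |z| < ρ: f_{1,i}(z; a) · f_{1,j}(x^{ϵ(i−j−2k)} z; a) = f_{1,i−k}(x^{−ϵ k} z; a) · f_{1,j+k}(x^{ϵ(i−j−k)} z; a). (This is relation (4.8) of Lemma 4.5.) -/

import Mathlib

/-- The q-integer `[n]_x = (x^n - x^{-n})/(x - x^{-1})`, with real powers of `x`. -/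
noncomputable def qint (x n : ℝ) : ℝ := (x ^ n - x ^ (-n)) / (x - x⁻¹)

lemma qint_eq (x t : ℝ) : qint x t = (x^(-t) - x^t)/(x⁻¹ - x) := by
  rw [qint, ← neg_div_neg_eq, neg_sub, neg_sub]

lemma hxinv {x : ℝ} (hx0 : 0 < x) (hx1 : x < 1) : 1 < x⁻¹ := by
  rw [lt_inv_comm₀] <;> simpa

lemma qint_pos {x : ℝ} (hx0 : 0 < x) (hx1 : x < 1) {t : ℝ} (ht : 0 < t) : 0 < qint x t := by
  rw [qint_eq]
  have h1 : x ^ t < x ^ (-t) := by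
    apply Real.rpow_lt_rpow_of_exponent_gt hx0 hx1; linarith
  have := hxinv hx0 hx1
  apply div_pos <;> linarith

lemma qint_one {x : ℝ} (hx0 : 0 < x) (hx1 : x < 1) : qint x 1 = 1 := by
  rw [qint, Real.rpow_one, Real.rpow_neg_one]
  have := hxinv hx0 hx1
  rw [div_self]; intro h; nlinarith [h]

lemma qint_mono {x : ℝ} (hx0 : 0 < x) (hx1 : x < 1) {s t : ℝ} (h : s ≤ t) :
    qint x s ≤ qint x t := by
  rw [qint_eq, qint_eq]
  have hd : 0 < x⁻¹ - x := by have := hxinv hx0 hx1; linarith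
  have h1 : x ^ (-s) ≤ x ^ (-t) := Real.rpow_le_rpow_of_exponent_ge hx0 hx1.le (by linarith)
  have h2 : x ^ t ≤ x ^ s := Real.rpow_le_rpow_of_exponent_ge hx0 hx1.le h
  gcongr

lemma qint_abs_le {x : ℝ} (hx0 : 0 < x) (hx1 : x < 1) (t : ℝ) :
    |qint x t| ≤ 2 * x ^ (-|t|) / (x⁻¹ - x) := by
  have hd : 0 < x⁻¹ - x := by have := hxinv hx0 hx1; linarith
  rw [qint_eq, abs_div, abs_of_pos hd]
  gcongr
  have h1 : x ^ (-t) ≤ x ^ (-|t|) :=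
    Real.rpow_le_rpow_of_exponent_ge hx0 hx1.le (by simpa using neg_abs_le (-t))
  have h2 : x ^ t ≤ x ^ (-|t|) :=
    Real.rpow_le_rpow_of_exponent_ge hx0 hx1.le (neg_abs_le t)
  have h3 : 0 < x ^ (-t) := Real.rpow_pos_of_pos hx0 _
  have h4 : 0 < x ^ t := Real.rpow_pos_of_pos hx0 _
  calc |x ^ (-t) - x ^ t| ≤ |x ^ (-t)| + |x ^ t| := abs_sub _ _
    _ = x ^ (-t) + x ^ t := by rw [abs_of_pos h3, abs_of_pos h4]
    _ ≤ 2 * x ^ (-|t|) := by linarith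

/-- The `m`-th coefficient of the exponent series defining the structure function
`f_{i,j}(z;a)` of the deformed W-superalgebra `W_{q,t}(A(M,N))`. -/
noncomputable def fCoeff (x r a : ℝ) (i j : ℤ) (m : ℕ) : ℝ :=
  (1 / (m : ℝ)) *
    (qint x ((r - 1) * m) * qint x (r * m) * qint x ((min i j : ℤ) * m) *
      qint x ((a - (max i j : ℤ)) * m)) /
    (qint x (m : ℝ) * qint x (a * m)) * (x - x⁻¹) ^ 2

lemma fCoeff_eq {x : ℝ} (r a : ℝ) (hx0 : 0 < x) (hx1 : x < 1) (ha : 0 < a)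
    {p : ℤ} (hp : 1 ≤ p) {n : ℕ} (hn : 1 ≤ n) :
    fCoeff x r a 1 p n =
      ((1/(n:ℝ)) * (qint x ((r-1)*n) * qint x (r*n)) / qint x (a*n) * (x - x⁻¹)) *
        (x ^ ((a - (p:ℝ)) * (n:ℝ)) - x ^ (-((a - (p:ℝ)) * (n:ℝ)))) := by
  have hmin : min (1:ℤ) p = 1 := min_eq_left hp
  have hmax : max (1:ℤ) p = p := max_eq_right hp
  have hn0 : (0:ℝ) < n := by exact_mod_cast hn.trans_lt' (by norm_num)
  have hQM : qint x (n:ℝ) ≠ 0 := (qint_pos hx0 hx1 hn0).ne'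
  have hQa : qint x (a*(n:ℝ)) ≠ 0 := (qint_pos hx0 hx1 (by positivity)).ne'
  have hw : x - x⁻¹ ≠ 0 := by have := hxinv hx0 hx1; intro h; nlinarith
  rw [fCoeff, hmin, hmax]
  rw [show qint x (((1:ℤ):ℝ) * (n:ℕ)) = qint x (n:ℝ) by norm_num]
  rw [show qint x ((a - ((p:ℤ):ℝ)) * ((n:ℕ):ℝ)) =
      (x ^ ((a - (p:ℝ)) * (n:ℝ)) - x ^ (-((a - (p:ℝ)) * (n:ℝ)))) / (x - x⁻¹) from rfl]
  have key : ∀ Q1 Q2 QM Qa Np M W : ℝ, QM ≠ 0 → Qa ≠ 0 → W ≠ 0 →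
      (1/M) * (Q1 * Q2 * QM * (Np/W)) / (QM*Qa) * W^2 = ((1/M)*(Q1*Q2)/Qa*W)*Np := by
    intros Q1 Q2 QM Qa Np M W h1 h2 h3
    field_simp
  exact key _ _ _ _ _ _ _ hQM hQa hw

/-- The `m`-th term of the exponent series of `f_{i,j}(z;a)` (including the minus sign),
indexed so that `m : ℕ` corresponds to the power `z^(m+1)`. -/
noncomputable def fTerm (x r a : ℝ) (i j : ℤ) (z : ℂ) (m : ℕ) : ℂ :=
  -((fCoeff x r a i j (m + 1) : ℝ) : ℂ) * z ^ (m + 1)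

lemma fCoeff_bound {x : ℝ} (r a : ℝ) (hx0 : 0 < x) (hx1 : x < 1) (ha : 0 < a)
    (i j : ℤ) {n : ℕ} (hn : 1 ≤ n) :
    |fCoeff x r a i j n| ≤
      (16 / ((x⁻¹ - x)^2 * qint x a)) *
        (x ^ (-(|r-1| + |r| + |((min i j : ℤ):ℝ)| + |a - ((max i j : ℤ):ℝ)|)))^n := by
  set d := x⁻¹ - x with hd_def
  have hd : 0 < d := by have := hxinv hx0 hx1; simp only [hd_def]; linarith
  set c1 := |r-1|; set c2 := |r|
  set c3 := |((min i j : ℤ):ℝ)|; set c4 := |a - ((max i j : ℤ):ℝ)|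
  have hn1 : (1:ℝ) ≤ (n:ℝ) := by exact_mod_cast hn
  have hn0 : (0:ℝ) < (n:ℝ) := by linarith
  have hqa : 0 < qint x a := qint_pos hx0 hx1 ha
  have hQM : (1:ℝ) ≤ qint x (n:ℝ) := by
    rw [← qint_one hx0 hx1]; exact qint_mono hx0 hx1 hn1
  have hQa : qint x a ≤ qint x (a*(n:ℝ)) :=
    qint_mono hx0 hx1 (le_mul_of_one_le_right ha.le hn1)
  have habs : ∀ c : ℝ, |qint x (c * (n:ℝ))| ≤ 2 * x ^ (-(|c| * (n:ℝ))) / d := by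
    intro c
    have := qint_abs_le hx0 hx1 (c * (n:ℝ))
    rwa [abs_mul, abs_of_nonneg hn0.le] at this
  have key : |fCoeff x r a i j n| =
      (1/(n:ℝ)) * (|qint x ((r-1)*(n:ℝ))| * |qint x (r*(n:ℝ))| *
        |qint x (((min i j : ℤ):ℝ)*(n:ℝ))| * |qint x ((a - ((max i j : ℤ):ℝ))*(n:ℝ))|) /
        (qint x (n:ℝ) * qint x (a*(n:ℝ))) * d^2 := by
    rw [fCoeff, abs_mul, abs_div, abs_mul, abs_mul, abs_mul, abs_mul]
    rw [abs_of_nonneg (by positivity : (0:ℝ) ≤ 1/(n:ℝ))]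
    rw [abs_of_pos (mul_pos (by linarith) (lt_of_lt_of_le hqa hQa))]
    rw [show ((x - x⁻¹)^2 : ℝ) = d^2 by rw [hd_def]; ring, abs_of_nonneg (sq_nonneg d)]
  rw [key]
  have hrp : ∀ c : ℝ, (0:ℝ) < x ^ (-(c * (n:ℝ))) := fun c => Real.rpow_pos_of_pos hx0 _
  calc (1/(n:ℝ)) * (|qint x ((r-1)*(n:ℝ))| * |qint x (r*(n:ℝ))| *
        |qint x (((min i j : ℤ):ℝ)*(n:ℝ))| * |qint x ((a - ((max i j : ℤ):ℝ))*(n:ℝ))|) /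
        (qint x (n:ℝ) * qint x (a*(n:ℝ))) * d^2
      ≤ 1 * ((2 * x ^ (-(c1 * (n:ℝ))) / d) * (2 * x ^ (-(c2 * (n:ℝ))) / d) *
          (2 * x ^ (-(c3 * (n:ℝ))) / d) * (2 * x ^ (-(c4 * (n:ℝ))) / d)) /
        (1 * qint x a) * d^2 := by
        have h1a : 0 < qint x (a*(n:ℝ)) := lt_of_lt_of_le hqa hQa
        have h1m : 0 < qint x (n:ℝ) := by linarith
        gcongr <;> first
          | exact habs _
          | exact hQM
          | exact hQa
          | exact (div_le_one hn0).mpr hn1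
          | positivity
      _ = (16 / (d^2 * qint x a)) * (x ^ (-(c1 + c2 + c3 + c4)))^n := by
        have hx4 : x ^ (-(c1*(n:ℝ))) * x ^ (-(c2*(n:ℝ))) * x ^ (-(c3*(n:ℝ))) * x ^ (-(c4*(n:ℝ)))
            = x ^ (-((c1+c2+c3+c4)*(n:ℝ))) := by
          rw [← Real.rpow_add hx0, ← Real.rpow_add hx0, ← Real.rpow_add hx0]
          ring_nf
        have hBn : (x ^ (-(c1+c2+c3+c4)))^n = x ^ (-((c1+c2+c3+c4)*(n:ℝ))) := by
          rw [← Real.rpow_natCast (x ^ (-(c1+c2+c3+c4))) n, ← Real.rpow_mul hx0.le]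
          ring_nf
        rw [hBn, ← hx4]
        field_simp
        ring

lemma summable_fTerm (x r a : ℝ) (hx0 : 0 < x) (hx1 : x < 1) (ha : 0 < a) (i j : ℤ) :
    ∃ ρ : ℝ, 0 < ρ ∧ ∀ z : ℂ, ‖z‖ < ρ → Summable (fTerm x r a i j z) := by
  set β := |r-1| + |r| + |((min i j : ℤ):ℝ)| + |a - ((max i j : ℤ):ℝ)| with hβ
  set B := x ^ (-β) with hB
  have hB0 : 0 < B := Real.rpow_pos_of_pos hx0 _
  refine ⟨B⁻¹, inv_pos.mpr hB0, fun z hz => ?_⟩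
  have hd : 0 < x⁻¹ - x := by have := hxinv hx0 hx1; linarith
  have hqa : 0 < qint x a := qint_pos hx0 hx1 ha
  set C := 16 / ((x⁻¹ - x)^2 * qint x a) with hC_def
  have hC : 0 < C := by positivity
  have hz0 : 0 ≤ ‖z‖ := norm_nonneg z
  have hBz : B * ‖z‖ < 1 := by
    calc B * ‖z‖ < B * B⁻¹ := by
          apply mul_lt_mul_of_pos_left hz hB0
      _ = 1 := mul_inv_cancel₀ hB0.ne'
  have hbound : ∀ m : ℕ, ‖fTerm x r a i j z m‖ ≤
      (C * B * ‖z‖) * (B * ‖z‖)^m := by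
    intro m
    have h1 : ‖fTerm x r a i j z m‖ = |fCoeff x r a i j (m+1)| * (‖z‖)^(m+1) := by
      rw [fTerm, norm_mul, norm_neg, Complex.norm_real, norm_pow]
      rfl
    rw [h1]
    calc |fCoeff x r a i j (m+1)| * (‖z‖)^(m+1)
        ≤ (C * B^(m+1)) * (‖z‖)^(m+1) := by
          gcongr
          exact fCoeff_bound r a hx0 hx1 ha i j (Nat.le_add_left 1 m)
      _ = (C * B * ‖z‖) * (B * ‖z‖)^m := by
          rw [mul_pow B (‖z‖)]
          ring
  apply Summable.of_norm
  apply Summable.of_nonneg_of_le (fun m => norm_nonneg _) hbound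
  exact (summable_geometric_of_lt_one (by positivity) hBz).mul_left _

lemma core_rel {x : ℝ} (hx : 0 < x) (A I J K M e : ℝ) (he : e = 1 ∨ e = -1) :
    (x^((A-I)*M) - x^(-((A-I)*M))) + (x^((A-J)*M) - x^(-((A-J)*M))) * x^(e*(I-J-2*K)*M)
    = (x^((A-(I-K))*M) - x^(-((A-(I-K))*M))) * x^(-e*K*M)
      + (x^((A-(J+K))*M) - x^(-((A-(J+K))*M))) * x^(e*(I-J-K)*M) := by
  rcases he with rfl | rfl <;>
  · simp only [Real.rpow_def_of_pos hx, sub_mul, ← Real.exp_add]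
    ring_nf

lemma coeff_rel {x : ℝ} (r a : ℝ) (hx0 : 0 < x) (hx1 : x < 1) (ha : 0 < a)
    (i j k : ℤ) (hi : 1 ≤ i) (hj : 1 ≤ j) (hik : 1 ≤ i - k) (hjk : 1 ≤ j + k)
    (e : ℝ) (he : e = 1 ∨ e = -1) {n : ℕ} (hn : 1 ≤ n) :
    fCoeff x r a 1 i n + fCoeff x r a 1 j n * (x ^ (e*((i:ℝ)-(j:ℝ)-2*(k:ℝ))))^n
    = fCoeff x r a 1 (i-k) n * (x ^ (-e*(k:ℝ)))^n
      + fCoeff x r a 1 (j+k) n * (x ^ (e*((i:ℝ)-(j:ℝ)-(k:ℝ))))^n := by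
  rw [fCoeff_eq r a hx0 hx1 ha hi hn, fCoeff_eq r a hx0 hx1 ha hj hn,
      fCoeff_eq r a hx0 hx1 ha hik hn, fCoeff_eq r a hx0 hx1 ha hjk hn]
  have hpow : ∀ t : ℝ, (x ^ t)^n = x ^ (t * (n:ℝ)) := by
    intro t; rw [← Real.rpow_natCast (x^t) n, ← Real.rpow_mul hx0.le]
  rw [hpow, hpow, hpow]
  push_cast
  set G := ((1/(n:ℝ)) * (qint x ((r-1)*(n:ℝ)) * qint x (r*(n:ℝ))) / qint x (a*(n:ℝ)) * (x - x⁻¹)) with hG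
  have hcore := core_rel hx0 a (i:ℝ) (j:ℝ) (k:ℝ) (n:ℝ) e he
  linear_combination G * hcore





/-- The structure function
`f_{i,j}(z;a) = exp(-Σ_{m≥1} c_m z^m)` of `W_{q,t}(A(M,N))`. -/
noncomputable def fFun (x r a : ℝ) (i j : ℤ) (z : ℂ) : ℂ :=
  Complex.exp (∑' m : ℕ, fTerm x r a i j z m)

/-- The real power `x^t`, regarded as a complex number. -/
noncomputable def xp (x t : ℝ) : ℂ := ((x ^ t : ℝ) : ℂ)

lemma term_rel {x : ℝ} (r a : ℝ) (hx0 : 0 < x) (hx1 : x < 1) (ha : 0 < a)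
    (i j k : ℤ) (hi : 1 ≤ i) (hj : 1 ≤ j) (hik : 1 ≤ i - k) (hjk : 1 ≤ j + k)
    (e : ℝ) (he : e = 1 ∨ e = -1) (z : ℂ) (m : ℕ) :
    fTerm x r a 1 i z m + fTerm x r a 1 j (xp x (e * ((i:ℝ) - (j:ℝ) - 2*(k:ℝ))) * z) m
    = fTerm x r a 1 (i-k) (xp x (-e * (k:ℝ)) * z) m
      + fTerm x r a 1 (j+k) (xp x (e * ((i:ℝ) - (j:ℝ) - (k:ℝ))) * z) m := by
  have hre := coeff_rel r a hx0 hx1 ha i j k hi hj hik hjk e he (n := m+1) (Nat.le_add_left 1 m)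
  have hc : ((fCoeff x r a 1 i (m+1) + fCoeff x r a 1 j (m+1) * (x ^ (e*((i:ℝ)-(j:ℝ)-2*(k:ℝ))))^(m+1) : ℝ) : ℂ)
      = ((fCoeff x r a 1 (i-k) (m+1) * (x ^ (-e*(k:ℝ)))^(m+1)
          + fCoeff x r a 1 (j+k) (m+1) * (x ^ (e*((i:ℝ)-(j:ℝ)-(k:ℝ))))^(m+1) : ℝ) : ℂ) := by
    exact_mod_cast congrArg Complex.ofReal hre
  push_cast at hc
  simp only [fTerm, xp, mul_pow]
  linear_combination (-(z^(m+1))) * hc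

/-- Relation (4.8) of Lemma 4.5: for a sign `e ∈ {+1,-1}` and an integer `k` with
`i - k ≥ 1`, `j + k ≥ 1`,
`f_{1,i}(z;a) f_{1,j}(x^{e(i-j-2k)}z;a) = f_{1,i-k}(x^{-ek}z;a) f_{1,j+k}(x^{e(i-j-k)}z;a)`
for `z` of sufficiently small modulus. -/
theorem statement4 (x r a : ℝ) (hx0 : 0 < x) (hx1 : x < 1) (hr : 1 < r) (ha : 0 < a)
    (i j k : ℤ) (hi : 1 ≤ i) (hj : 1 ≤ j) (hik : 1 ≤ i - k) (hjk : 1 ≤ j + k)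
    (e : ℝ) (he : e = 1 ∨ e = -1) :
    ∃ ρ : ℝ, 0 < ρ ∧ ∀ z : ℂ, ‖z‖ < ρ →
      fFun x r a 1 i z * fFun x r a 1 j (xp x (e * ((i : ℝ) - (j : ℝ) - 2 * (k : ℝ))) * z) =
        fFun x r a 1 (i - k) (xp x (-e * (k : ℝ)) * z) *
          fFun x r a 1 (j + k) (xp x (e * ((i : ℝ) - (j : ℝ) - (k : ℝ))) * z) := by
  obtain ⟨ρ₁, hρ₁, hs₁⟩ := summable_fTerm x r a hx0 hx1 ha 1 i
  obtain ⟨ρ₂, hρ₂, hs₂⟩ := summable_fTerm x r a hx0 hx1 ha 1 j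
  obtain ⟨ρ₃, hρ₃, hs₃⟩ := summable_fTerm x r a hx0 hx1 ha 1 (i-k)
  obtain ⟨ρ₄, hρ₄, hs₄⟩ := summable_fTerm x r a hx0 hx1 ha 1 (j+k)
  set t2 := e * ((i:ℝ) - (j:ℝ) - 2*(k:ℝ))
  set t3 := -e * (k:ℝ)
  set t4 := e * ((i:ℝ) - (j:ℝ) - (k:ℝ))
  have hc2 : (0:ℝ) < x ^ t2 := Real.rpow_pos_of_pos hx0 _
  have hc3 : (0:ℝ) < x ^ t3 := Real.rpow_pos_of_pos hx0 _
  have hc4 : (0:ℝ) < x ^ t4 := Real.rpow_pos_of_pos hx0 _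
  refine ⟨min (min ρ₁ (ρ₂ / x ^ t2)) (min (ρ₃ / x ^ t3) (ρ₄ / x ^ t4)),
    lt_min (lt_min hρ₁ (by positivity)) (lt_min (by positivity) (by positivity)), fun z hz => ?_⟩
  have habs : ∀ t : ℝ, ‖xp x t * z‖ = x ^ t * ‖z‖ := by
    intro t
    rw [norm_mul, xp, Complex.norm_real, Real.norm_eq_abs, abs_of_pos (Real.rpow_pos_of_pos hx0 t)]
  have hz1 : ‖z‖ < ρ₁ := hz.trans_le ((min_le_left _ _).trans (min_le_left _ _))
  have hz2 : ‖xp x t2 * z‖ < ρ₂ := by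
    rw [habs]
    calc x ^ t2 * ‖z‖ < x ^ t2 * (ρ₂ / x ^ t2) := by
          exact mul_lt_mul_of_pos_left (hz.trans_le ((min_le_left _ _).trans (min_le_right _ _))) hc2
      _ = ρ₂ := by field_simp
  have hz3 : ‖xp x t3 * z‖ < ρ₃ := by
    rw [habs]
    calc x ^ t3 * ‖z‖ < x ^ t3 * (ρ₃ / x ^ t3) := by
          exact mul_lt_mul_of_pos_left (hz.trans_le ((min_le_right _ _).trans (min_le_left _ _))) hc3
      _ = ρ₃ := by field_simp
  have hz4 : ‖xp x t4 * z‖ < ρ₄ := by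
    rw [habs]
    calc x ^ t4 * ‖z‖ < x ^ t4 * (ρ₄ / x ^ t4) := by
          exact mul_lt_mul_of_pos_left (hz.trans_le ((min_le_right _ _).trans (min_le_right _ _))) hc4
      _ = ρ₄ := by field_simp
  have S1 := hs₁ z hz1
  have S2 := hs₂ _ hz2
  have S3 := hs₃ _ hz3
  have S4 := hs₄ _ hz4
  rw [fFun, fFun, fFun, fFun, ← Complex.exp_add, ← Complex.exp_add]
  congr 1
  rw [← Summable.tsum_add S1 S2, ← Summable.tsum_add S3 S4]
  exact tsum_congr fun m => term_rel r a hx0 hx1 ha i j k hi hj hik hjk e he z m
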